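/- For p ∈ (0,1) let X_p and Y_p be independent random variables on ℤ, each with geometric pmf P(X_p = n) = p(1−p)^n for n ≥ 0. Then for every α ∈ (0,1)∪(1,∞), H_α(X_p − Y_p) − H_α(X_p) = (1−α)⁻¹ · log( (1 + (1−p)^α) / (2−p)^α ), and consequently lim_{p→0⁺} ( H_α(X_p − Y_p) − H_α(X_p) ) = log 2. -/

import Mathlib

open Real Filter

/-- Rényi entropy of order `α ∈ (0,1)∪(1,∞)` of a pmf on `ℤ`, natural logarithm. -/
noncomputable def renyiEnt (α : ℝ) (p : ℤ → ℝ) : ℝ :=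
  (1 - α)⁻¹ * Real.log (∑' n, p n ^ α)

/-- The geometric pmf on `ℤ` with parameter `p`:
`Z_p(n) = p(1−p)ⁿ` for `n ≥ 0` and `0` otherwise. -/
noncomputable def geomPMF (p : ℝ) : ℤ → ℝ :=
  fun n => if 0 ≤ n then p * (1 - p) ^ n.toNat else 0

/-- The pmf of `X − Y` for iid `X, Y` with pmf `p`. -/
noncomputable def diffPMF (p : ℤ → ℝ) : ℤ → ℝ :=
  fun k => ∑' n, p (k + n) * p n

lemma pow_rpow_comm {x : ℝ} (hx : 0 ≤ x) (n : ℕ) (α : ℝ) : (x ^ n) ^ α = (x ^ α) ^ n := by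
  rw [← Real.rpow_natCast x n, ← Real.rpow_mul hx, mul_comm, Real.rpow_mul hx,
    Real.rpow_natCast]

lemma geom_aux {p : ℝ} (hp0 : 0 < p) (hp1 : p < 1) (m : ℕ) :
    ∑' n : ℕ, (p * (1 - p) ^ (m + n)) * (p * (1 - p) ^ n) = p / (2 - p) * (1 - p) ^ m := by
  have hq0 : (0:ℝ) ≤ 1 - p := by linarith
  have h2 : (1 - p) ^ 2 < 1 := by nlinarith
  have hne : (2:ℝ) - p ≠ 0 := by linarith
  have key : ∀ n : ℕ, (p * (1 - p) ^ (m + n)) * (p * (1 - p) ^ n)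
      = (p ^ 2 * (1 - p) ^ m) * ((1 - p) ^ 2) ^ n := by
    intro n
    rw [← pow_mul, pow_add, two_mul, pow_add]
    ring
  rw [tsum_congr key, tsum_mul_left, tsum_geometric_of_lt_one (by positivity) h2]
  have hden : 1 - (1 - p) ^ 2 = p * (2 - p) := by ring
  rw [hden]
  field_simp

lemma diff_geom {p : ℝ} (hp0 : 0 < p) (hp1 : p < 1) (k : ℤ) :
    diffPMF (geomPMF p) k = p / (2 - p) * (1 - p) ^ k.natAbs := by
  rcases le_or_gt 0 k with hk | hk
  · have hsupp : Function.support (fun n : ℤ => geomPMF p (k + n) * geomPMF p n)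
        ⊆ Set.range ((↑) : ℕ → ℤ) := by
      intro n hn
      simp only [Function.mem_support] at hn
      rcases le_or_gt 0 n with h | h
      · exact ⟨n.toNat, Int.toNat_of_nonneg h⟩
      · exact absurd (by simp [geomPMF, not_le.2 h]) hn
    have hterm : ∀ n : ℕ, geomPMF p (k + (n:ℤ)) * geomPMF p (n:ℤ)
        = (p * (1 - p) ^ (k.natAbs + n)) * (p * (1 - p) ^ n) := by
      intro n
      simp only [geomPMF, if_pos (show (0:ℤ) ≤ k + (n:ℤ) by omega),
        if_pos (show (0:ℤ) ≤ (n:ℤ) by positivity)]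
      rw [show ((k + (n:ℤ)).toNat = k.natAbs + n) by omega, Int.toNat_natCast]
    have := Nat.cast_injective.tsum_eq (f := fun n : ℤ => geomPMF p (k + n) * geomPMF p n) hsupp
    rw [diffPMF, ← this, tsum_congr hterm, geom_aux hp0 hp1]
  · have hinj : Function.Injective (fun n : ℕ => -k + (n:ℤ)) := by
      intro a b hab; simpa using hab
    have hsupp : Function.support (fun n : ℤ => geomPMF p (k + n) * geomPMF p n)
        ⊆ Set.range (fun n : ℕ => -k + (n:ℤ)) := by
      intro n hn
      simp only [Function.mem_support] at hn
      rcases le_or_gt 0 (k + n) with h | h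
      · exact ⟨(k + n).toNat, show -k + (((k + n).toNat : ℕ) : ℤ) = n by omega⟩
      · exact absurd (by simp [geomPMF, not_le.2 h]) hn
    have hterm : ∀ n : ℕ, geomPMF p (k + (-k + (n:ℤ))) * geomPMF p (-k + (n:ℤ))
        = (p * (1 - p) ^ (k.natAbs + n)) * (p * (1 - p) ^ n) := by
      intro n
      simp only [geomPMF, if_pos (show (0:ℤ) ≤ k + (-k + (n:ℤ)) by omega),
        if_pos (show (0:ℤ) ≤ -k + (n:ℤ) by omega)]
      rw [show ((k + (-k + (n:ℤ))).toNat = n) by omega,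
        show ((-k + (n:ℤ)).toNat = k.natAbs + n) by omega]
      ring
    have := hinj.tsum_eq (f := fun n : ℤ => geomPMF p (k + n) * geomPMF p n) hsupp
    rw [diffPMF, ← this, tsum_congr hterm, geom_aux hp0 hp1]

lemma tsum_geom_rpow {p α : ℝ} (hp0 : 0 < p) (hp1 : p < 1) (hα : 0 < α) :
    ∑' n : ℤ, geomPMF p n ^ α = p ^ α * (1 - (1 - p) ^ α)⁻¹ := by
  have hq0 : (0:ℝ) ≤ 1 - p := by linarith
  have hQ1 : (1 - p) ^ α < 1 := Real.rpow_lt_one hq0 (by linarith) hα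
  have hsupp : Function.support (fun n : ℤ => geomPMF p n ^ α)
      ⊆ Set.range ((↑) : ℕ → ℤ) := by
    intro n hn
    simp only [Function.mem_support] at hn
    rcases le_or_gt 0 n with h | h
    · exact ⟨n.toNat, Int.toNat_of_nonneg h⟩
    · refine absurd ?_ hn
      simp [geomPMF, not_le.2 h, Real.zero_rpow hα.ne']
  have hterm : ∀ n : ℕ, geomPMF p (n:ℤ) ^ α = p ^ α * ((1 - p) ^ α) ^ n := by
    intro n
    simp only [geomPMF, if_pos (show (0:ℤ) ≤ (n:ℤ) by positivity), Int.toNat_natCast]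
    rw [Real.mul_rpow hp0.le (by positivity), pow_rpow_comm hq0]
  have := Nat.cast_injective.tsum_eq (f := fun n : ℤ => geomPMF p n ^ α) hsupp
  rw [← this, tsum_congr hterm, tsum_mul_left,
    tsum_geometric_of_lt_one (by positivity) hQ1]

lemma tsum_natAbs_geom {c Q : ℝ} (hQ0 : 0 ≤ Q) (hQ1 : Q < 1) :
    ∑' k : ℤ, c * Q ^ k.natAbs = c * ((1 + Q) * (1 - Q)⁻¹) := by
  have h1 : HasSum (fun n : ℕ => c * Q ^ ((n:ℤ)).natAbs) (c * (1 - Q)⁻¹) := by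
    refine ((hasSum_geometric_of_lt_one hQ0 hQ1).mul_left c).congr_fun fun n => ?_
    rw [Int.natAbs_natCast]
  have h2 : HasSum (fun n : ℕ => c * Q ^ (-((n:ℤ) + 1)).natAbs) ((c * Q) * (1 - Q)⁻¹) := by
    refine ((hasSum_geometric_of_lt_one hQ0 hQ1).mul_left (c * Q)).congr_fun fun n => ?_
    rw [show (-((n:ℤ) + 1)).natAbs = n + 1 by omega, pow_succ]
    ring
  rw [(HasSum.of_nat_of_neg_add_one (f := fun k : ℤ => c * Q ^ k.natAbs) h1 h2).tsum_eq]
  ring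

/-- For iid geometric `X_p, Y_p` and `α ∈ (0,1)∪(1,∞)`:
`H_α(X_p−Y_p) − H_α(X_p) = (1−α)⁻¹ log((1+(1−p)^α)/(2−p)^α)`, and this gap tends to
`log 2` as `p → 0⁺`. -/
theorem geometric_difference_renyi_gap (α : ℝ) (hα : 0 < α) (hα1 : α ≠ 1) :
    (∀ p ∈ Set.Ioo (0 : ℝ) 1,
      renyiEnt α (diffPMF (geomPMF p)) - renyiEnt α (geomPMF p) =
        (1 - α)⁻¹ * Real.log ((1 + (1 - p) ^ α) / (2 - p) ^ α)) ∧
    Tendsto (fun p : ℝ => renyiEnt α (diffPMF (geomPMF p)) - renyiEnt α (geomPMF p))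
      (nhdsWithin 0 (Set.Ioi 0)) (nhds (Real.log 2)) := by
  have hmain : ∀ p ∈ Set.Ioo (0 : ℝ) 1,
      renyiEnt α (diffPMF (geomPMF p)) - renyiEnt α (geomPMF p) =
        (1 - α)⁻¹ * Real.log ((1 + (1 - p) ^ α) / (2 - p) ^ α) := by
    rintro p ⟨hp0, hp1⟩
    have hq0 : (0:ℝ) ≤ 1 - p := by linarith
    have hQ0 : (0:ℝ) ≤ (1 - p) ^ α := Real.rpow_nonneg hq0 α
    have hQ1 : (1 - p) ^ α < 1 := Real.rpow_lt_one hq0 (by linarith) hα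
    have h2p : (0:ℝ) < 2 - p := by linarith
    have hc : (0:ℝ) ≤ p / (2 - p) := by positivity
    have hpα : (0:ℝ) < p ^ α := Real.rpow_pos_of_pos hp0 α
    have h2α : (0:ℝ) < (2 - p) ^ α := Real.rpow_pos_of_pos h2p α
    have h1Q : (0:ℝ) < 1 - (1 - p) ^ α := by linarith
    have hSd : ∑' k : ℤ, diffPMF (geomPMF p) k ^ α
        = (p / (2 - p)) ^ α * ((1 + (1 - p) ^ α) * (1 - (1 - p) ^ α)⁻¹) := by
      have h1 : ∀ k : ℤ, diffPMF (geomPMF p) k ^ α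
          = (p / (2 - p)) ^ α * ((1 - p) ^ α) ^ k.natAbs := by
        intro k
        rw [diff_geom hp0 hp1 k, Real.mul_rpow hc (by positivity), pow_rpow_comm hq0]
      rw [tsum_congr h1, tsum_natAbs_geom hQ0 hQ1]
    have hSg := tsum_geom_rpow hp0 hp1 hα
    have hSdpos : (0:ℝ) < (p / (2 - p)) ^ α * ((1 + (1 - p) ^ α) * (1 - (1 - p) ^ α)⁻¹) := by
      have : (0:ℝ) < p / (2 - p) := by positivity
      have h := Real.rpow_pos_of_pos this α
      positivity
    have hSgpos : (0:ℝ) < p ^ α * (1 - (1 - p) ^ α)⁻¹ := by positivity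
    rw [renyiEnt, renyiEnt, hSd, hSg, ← mul_sub,
      ← Real.log_div hSdpos.ne' hSgpos.ne']
    congr 2
    rw [Real.div_rpow hp0.le h2p.le]
    field_simp
  refine ⟨hmain, ?_⟩
  have h1α : (1:ℝ) - α ≠ 0 := sub_ne_zero_of_ne (fun h => hα1 h.symm)
  have t1 : Tendsto (fun p : ℝ => (1 - p) ^ α) (nhds 0) (nhds 1) := by
    have hc : ContinuousAt (fun x : ℝ => x ^ α) 1 :=
      Real.continuousAt_rpow_const 1 α (Or.inl one_ne_zero)
    have : Tendsto (fun p : ℝ => 1 - p) (nhds 0) (nhds 1) := by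
      simpa using (tendsto_const_nhds (x := (1:ℝ))).sub (tendsto_id (x := nhds (0:ℝ)))
    simpa [Real.one_rpow, Function.comp_def] using (hc.tendsto.comp this)
  have t2 : Tendsto (fun p : ℝ => (2 - p) ^ α) (nhds 0) (nhds ((2:ℝ) ^ α)) := by
    have hc : ContinuousAt (fun x : ℝ => x ^ α) 2 :=
      Real.continuousAt_rpow_const 2 α (Or.inl two_ne_zero)
    have : Tendsto (fun p : ℝ => 2 - p) (nhds 0) (nhds 2) := by
      simpa using (tendsto_const_nhds (x := (2:ℝ))).sub (tendsto_id (x := nhds (0:ℝ)))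
    simpa [Function.comp_def] using (hc.tendsto.comp this)
  have h2α : (0:ℝ) < (2:ℝ) ^ α := Real.rpow_pos_of_pos two_pos α
  have t3 : Tendsto (fun p : ℝ => (1 + (1 - p) ^ α) / (2 - p) ^ α) (nhds 0)
      (nhds ((2:ℝ) / (2:ℝ) ^ α)) := by
    have h := ((tendsto_const_nhds (x := (1:ℝ))).add t1).div t2 h2α.ne'
    norm_num at h
    convert h using 2
    rfl
  have hvalpos : (0:ℝ) < (2:ℝ) / (2:ℝ) ^ α := by positivity
  have t4 : Tendsto (fun p : ℝ => (1 - α)⁻¹ * Real.log ((1 + (1 - p) ^ α) / (2 - p) ^ α))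
      (nhds 0) (nhds (Real.log 2)) := by
    have hlog : Tendsto (fun p : ℝ => Real.log ((1 + (1 - p) ^ α) / (2 - p) ^ α)) (nhds 0)
        (nhds (Real.log ((2:ℝ) / (2:ℝ) ^ α))) :=
      (Real.continuousAt_log hvalpos.ne').tendsto.comp t3
    have hval : (1 - α)⁻¹ * Real.log ((2:ℝ) / (2:ℝ) ^ α) = Real.log 2 := by
      rw [Real.log_div two_ne_zero h2α.ne', Real.log_rpow two_pos]
      field_simp
    have := hlog.const_mul ((1 - α)⁻¹)
    rwa [hval] at this
  refine (t4.mono_left nhdsWithin_le_nhds).congr' ?_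
  filter_upwards [Ioo_mem_nhdsGT_of_mem (by norm_num : (0:ℝ) ∈ Set.Ico 0 1)] with p hp
  exact (hmain p hp).symm
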